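/- The fan graph F_{m,n} = I_m ∇ P_n (the join of an independent set on m vertices with a path on n vertices) is a square if and only if m ≥ 2, or (m = 1 and n ≥ 3 is odd). -/

import Mathlib

open SimpleGraph

/-- Butterfly involution data: `φ` is an involutive automorphism of `G`, with nonempty
fixed set and nonempty non-fixed set, the common-neighbor condition, and a partition
`A0 ∪ A1` of the non-fixed vertices with no crossing edges, swapped by `φ`. -/
def ButterflyData {V : Type*} (G : SimpleGraph V) (phi : G ≃g G) (A0 A1 : Set V) : Prop :=
  Function.Involutive phi ∧
  (∃ v, phi v = v) ∧ (∃ v, phi v ≠ v) ∧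
  (∀ u : V, phi u ≠ u →
    G.neighborSet u ∩ G.neighborSet (phi u) = G.neighborSet u ∩ {v | phi v = v}) ∧
  A0 ∪ A1 = {v | phi v ≠ v} ∧ Disjoint A0 A1 ∧
  (∀ a ∈ A0, ∀ b ∈ A1, ¬ G.Adj a b) ∧
  (∀ a ∈ A0, phi a ∈ A1) ∧ (∀ a ∈ A1, phi a ∈ A0)

/-- A graph is a square (in the gluing algebra) iff it admits a butterfly involution. -/
def IsSquareGraph {V : Type*} (G : SimpleGraph V) : Prop :=
  ∃ (phi : G ≃g G) (A0 A1 : Set V), ButterflyData G phi A0 A1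

/-- The join `G ∇ H` of two graphs: all edges of each, plus all cross edges. -/
def joinGraph {α β : Type*} (G : SimpleGraph α) (H : SimpleGraph β) :
    SimpleGraph (α ⊕ β) where
  Adj x y := match x, y with
    | Sum.inl a, Sum.inl b => G.Adj a b
    | Sum.inr a, Sum.inr b => H.Adj a b
    | _, _ => True
  symm := ⟨by rintro (a | a) (b | b) h <;> first | exact h.symm | trivial⟩
  loopless := ⟨by rintro (a | a) h <;> exact SimpleGraph.irrefl _ h⟩

theorem square_of_two_le {m n : ℕ} (hm : 2 ≤ m) (hn : 1 ≤ n) :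
    IsSquareGraph (joinGraph (⊥ : SimpleGraph (Fin m)) (pathGraph n)) := by
  set G := joinGraph (⊥ : SimpleGraph (Fin m)) (pathGraph n) with hG
  set a : Fin m := ⟨0, by omega⟩ with ha
  set b : Fin m := ⟨1, by omega⟩ with hb
  have hab : a ≠ b := by simp [ha, hb, Fin.ext_iff]
  set e : Equiv.Perm (Fin m ⊕ Fin n) := Equiv.sumCongr (Equiv.swap a b) (Equiv.refl _) with he
  have hel : ∀ x : Fin m, e (Sum.inl x) = Sum.inl (Equiv.swap a b x) := fun x => rfl
  have her : ∀ x : Fin n, e (Sum.inr x) = Sum.inr x := fun x => rfl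
  have hmap : ∀ x y : Fin m ⊕ Fin n, G.Adj (e x) (e y) ↔ G.Adj x y := by
    rintro (x | x) (y | y) <;> simp [hel, her, hG, joinGraph]
  set phi : G ≃g G := ⟨e, @fun x y => hmap x y⟩ with hphi
  have hphi_app : ∀ x, phi x = e x := fun x => rfl
  refine ⟨phi, {Sum.inl a}, {Sum.inl b}, ?_, ?_, ?_, ?_, ?_, ?_, ?_, ?_, ?_⟩
  · intro v
    rcases v with x | x <;> simp [hphi_app, hel, her, Equiv.swap_apply_self]
  · exact ⟨Sum.inr ⟨0, by omega⟩, rfl⟩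
  · refine ⟨Sum.inl a, ?_⟩
    simp [hphi_app, hel, Equiv.swap_apply_left]
    exact fun h => hab h.symm
  · intro u hu
    rcases u with x | x
    · ext v
      rcases v with k | j <;>
        simp [hphi_app, hel, her, mem_neighborSet, hG, joinGraph]
    · exact absurd (her x) hu
  · ext v
    rcases v with k | j
    · simp only [Set.mem_union, Set.mem_singleton_iff, Set.mem_setOf_eq, hphi_app, hel]
      constructor
      · rintro (h | h)
        · obtain rfl : k = a := Sum.inl.inj h
          rw [Equiv.swap_apply_left]; exact fun h' => hab (Sum.inl.inj h').symm
        · obtain rfl : k = b := Sum.inl.inj h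
          rw [Equiv.swap_apply_right]; exact fun h' => hab (Sum.inl.inj h')
      · intro h
        by_cases h1 : k = a
        · exact Or.inl (by rw [h1])
        · by_cases h2 : k = b
          · exact Or.inr (by rw [h2])
          · exact absurd (by rw [Equiv.swap_apply_of_ne_of_ne h1 h2]) h
    · simp [hphi_app, her]
  · simp only [Set.disjoint_singleton]
    exact fun h => hab (Sum.inl.inj h)
  · rintro x hx y hy
    simp only [Set.mem_singleton_iff] at hx hy
    rw [hx, hy]
    simp [hG, joinGraph]
  · intro x hx
    simp only [Set.mem_singleton_iff] at hx
    rw [hx]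
    simp [hphi_app, hel, Equiv.swap_apply_left]
  · intro x hx
    simp only [Set.mem_singleton_iff] at hx
    rw [hx]
    simp [hphi_app, hel, Equiv.swap_apply_right]

theorem square_of_odd {m n k : ℕ} (hm : 1 ≤ m) (hk : 1 ≤ k) (hnk : n = 2 * k + 1) :
    IsSquareGraph (joinGraph (⊥ : SimpleGraph (Fin m)) (pathGraph n)) := by
  set G := joinGraph (⊥ : SimpleGraph (Fin m)) (pathGraph n) with hG
  set e : Equiv.Perm (Fin m ⊕ Fin n) :=
    Equiv.sumCongr (Equiv.refl _) (Fin.revPerm) with he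
  have hel : ∀ x : Fin m, e (Sum.inl x) = Sum.inl x := fun x => rfl
  have her : ∀ x : Fin n, e (Sum.inr x) = Sum.inr x.rev := fun x => rfl
  have hrev : ∀ x : Fin n, (x.rev).val = n - 1 - x.val := by
    intro x; rw [Fin.val_rev]; omega
  have hmap : ∀ x y : Fin m ⊕ Fin n, G.Adj (e x) (e y) ↔ G.Adj x y := by
    rintro (x | x) (y | y) <;> simp [hel, her, hG, joinGraph, pathGraph_adj, hrev] <;>
      [skip] <;> skip
    have hx := x.isLt; have hy := y.isLt
    omega
  set phi : G ≃g G := ⟨e, @fun x y => hmap x y⟩ with hphi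
  have hphi_app : ∀ x, phi x = e x := fun x => rfl
  have hrevfix : ∀ x : Fin n, x.rev = x ↔ x.val = k := by
    intro x
    have hx := x.isLt
    rw [Fin.ext_iff, hrev]
    omega
  refine ⟨phi, {v | ∃ i : Fin n, v = Sum.inr i ∧ i.val < k},
    {v | ∃ i : Fin n, v = Sum.inr i ∧ k < i.val}, ?_, ?_, ?_, ?_, ?_, ?_, ?_, ?_, ?_⟩
  · intro v
    rcases v with x | x <;> simp [hphi_app, hel, her, Fin.rev_rev]
  · exact ⟨Sum.inl ⟨0, hm⟩, rfl⟩
  · refine ⟨Sum.inr ⟨0, by omega⟩, ?_⟩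
    rw [hphi_app, her]
    simp only [ne_eq, Sum.inr.injEq]
    rw [hrevfix]
    simp; omega
  · intro u hu
    rcases u with x | x
    · exact absurd (hel x) hu
    · rw [hphi_app, her] at hu ⊢
      have hxk : x.val ≠ k := by
        intro h
        exact hu (by rw [(hrevfix x).2 h])
      have hx := x.isLt
      ext v
      rcases v with i | j
      · simp [mem_neighborSet, hG, joinGraph, hphi_app, hel]
      · simp only [mem_neighborSet, Set.mem_inter_iff, Set.mem_setOf_eq, hphi_app, her]
        have hj := j.isLt
        constructor
        · rintro ⟨h1, h2⟩
          refine ⟨h1, ?_⟩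
          rw [Sum.inr.injEq, hrevfix]
          simp only [hG, joinGraph, pathGraph_adj] at h1 h2
          rw [hrev] at h2
          omega
        · rintro ⟨h1, h2⟩
          refine ⟨h1, ?_⟩
          rw [Sum.inr.injEq, hrevfix] at h2
          simp only [hG, joinGraph, pathGraph_adj] at h1 ⊢
          rw [hrev]
          omega
  · ext v
    rcases v with i | j
    · simp [hphi_app, hel]
    · simp only [Set.mem_union, Set.mem_setOf_eq, Sum.inr.injEq, hphi_app, her]
      have hj := j.isLt
      constructor
      · rintro (⟨i, hi, hik⟩ | ⟨i, hi, hik⟩) <;> obtain rfl : j = i := hi <;>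
          (intro h; rw [Sum.inr.injEq, hrevfix] at h; omega)
      · intro h
        have : j.val ≠ k := by
          intro hc; exact h (by rw [(hrevfix j).2 hc])
        rcases Nat.lt_or_ge j.val k with h' | h'
        · exact Or.inl ⟨j, rfl, h'⟩
        · exact Or.inr ⟨j, rfl, by omega⟩
  · rw [Set.disjoint_left]
    rintro v ⟨i, hi, hik⟩ ⟨i', hi', hik'⟩
    rw [hi] at hi'
    obtain rfl : i = i' := Sum.inr.inj hi'
    omega
  · rintro x ⟨i, rfl, hik⟩ y ⟨j, rfl, hjk⟩
    simp only [hG, joinGraph, pathGraph_adj]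
    push_neg
    omega
  · rintro x ⟨i, rfl, hik⟩
    rw [hphi_app, her]
    refine ⟨i.rev, rfl, ?_⟩
    rw [hrev]
    have := i.isLt
    omega
  · rintro x ⟨i, rfl, hik⟩
    rw [hphi_app, her]
    refine ⟨i.rev, rfl, ?_⟩
    rw [hrev]
    have := i.isLt
    omega

theorem odd_of_square {n : ℕ} (hn : 1 ≤ n)
    (hsq : IsSquareGraph (joinGraph (⊥ : SimpleGraph (Fin 1)) (pathGraph n))) :
    3 ≤ n ∧ Odd n := by
  classical
  set G := joinGraph (⊥ : SimpleGraph (Fin 1)) (pathGraph n) with hG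
  obtain ⟨phi, A0, A1, hinv, hfix, hmov, hnb, hun, hdisj, hcross, hphi0, hphi1⟩ := hsq
  -- the apex is fixed
  have hapex : phi (Sum.inl 0) = Sum.inl 0 := by
    by_contra h
    have hmem : (Sum.inl 0 : Fin 1 ⊕ Fin n) ∈ A0 ∪ A1 := by
      rw [hun]; exact h
    obtain ⟨j, hj⟩ : ∃ j, phi (Sum.inl 0) = Sum.inr j := by
      rcases hj : phi (Sum.inl 0) with a | j
      · exact absurd (by rw [hj, Fin.fin_one_eq_zero a]) h
      · exact ⟨j, rfl⟩
    rcases hmem with h0 | h1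
    · exact hcross _ h0 _ (hphi0 _ h0) (by rw [hj]; trivial)
    · exact hcross _ (hphi1 _ h1) _ h1 (by rw [hj]; trivial)
  have hinj : Function.Injective phi := fun x y hxy => by
    have := congrArg phi hxy
    rwa [hinv x, hinv y] at this
  -- phi sends path vertices to path vertices
  have hfr : ∀ i : Fin n, ∃ j : Fin n, phi (Sum.inr i) = Sum.inr j := by
    intro i
    rcases hj : phi (Sum.inr i) with a | j
    · exfalso
      have : phi (Sum.inr i) = phi (Sum.inl 0) := by
        rw [hj, Fin.fin_one_eq_zero a, hapex]
      exact absurd (hinj this) (by simp)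
    · exact ⟨j, rfl⟩
  set F : ℕ → ℕ := fun k => if h : k < n then ((hfr ⟨k, h⟩).choose).val else 0 with hFdef
  have hFlt : ∀ k, k < n → F k < n := by
    intro k h
    simp only [hFdef, dif_pos h]
    exact ((hfr ⟨k, h⟩).choose).isLt
  have hF : ∀ (k : ℕ) (h : k < n), phi (Sum.inr ⟨k, h⟩) = Sum.inr ⟨F k, hFlt k h⟩ := by
    intro k h
    have : (⟨F k, hFlt k h⟩ : Fin n) = (hfr ⟨k, h⟩).choose := by
      apply Fin.ext
      simp only [hFdef, dif_pos h]
    rw [this]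
    exact (hfr ⟨k, h⟩).choose_spec
  have hFinv : ∀ k, k < n → F (F k) = k := by
    intro k h
    have h2 := hinv (Sum.inr ⟨k, h⟩)
    rw [hF k h, hF (F k) (hFlt k h)] at h2
    have := Sum.inr.inj h2
    exact congrArg Fin.val this
  have hFfix : ∀ (k : ℕ) (h : k < n), phi (Sum.inr ⟨k, h⟩) = Sum.inr ⟨k, h⟩ ↔ F k = k := by
    intro k h
    rw [hF k h]
    simp [Fin.ext_iff]
  have hFadj : ∀ i j (hi : i < n) (hj : j < n), (i + 1 = j ∨ j + 1 = i) →
      (F i + 1 = F j ∨ F j + 1 = F i) := by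
    intro i j hi hj hadj
    have h2 : G.Adj (phi (Sum.inr ⟨i, hi⟩)) (phi (Sum.inr ⟨j, hj⟩)) := by
      rw [phi.map_rel_iff]
      simpa [hG, joinGraph, pathGraph_adj] using hadj
    rw [hF i hi, hF j hj] at h2
    simpa [hG, joinGraph, pathGraph_adj] using h2
  -- neighbor condition in arithmetic form
  have hNB : ∀ i j (hi : i < n) (hj : j < n), F i ≠ i → F j = j →
      (i + 1 = j ∨ j + 1 = i) → (F i + 1 = j ∨ j + 1 = F i) := by
    intro i j hi hj hFi hFj hadj
    have hu : phi (Sum.inr ⟨i, hi⟩) ≠ Sum.inr ⟨i, hi⟩ := by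
      rw [Ne, hFfix i hi]; exact hFi
    have hset := hnb _ hu
    have hmem : (Sum.inr ⟨j, hj⟩ : Fin 1 ⊕ Fin n) ∈
        G.neighborSet (Sum.inr ⟨i, hi⟩) ∩ {v | phi v = v} := by
      constructor
      · simpa [hG, joinGraph, pathGraph_adj] using hadj
      · simp only [Set.mem_setOf_eq]
        rw [hFfix j hj]; exact hFj
    rw [← hset] at hmem
    have h2 := hmem.2
    rw [hF i hi] at h2
    simpa [hG, joinGraph, pathGraph_adj, Or.comm] using h2
  -- some path vertex is not fixed
  have hex : ∃ k, k < n ∧ F k ≠ k := by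
    obtain ⟨v, hv⟩ := hmov
    rcases v with a | i
    · exact absurd (by rw [Fin.fin_one_eq_zero a, hapex]) hv
    · refine ⟨i.val, i.isLt, ?_⟩
      intro h
      exact hv (by rw [show (Sum.inr i : Fin 1 ⊕ Fin n) = Sum.inr ⟨i.val, i.isLt⟩ by simp,
        (hFfix i.val i.isLt).2 h])
  -- Step 1: the least non-fixed path vertex is 0
  have hzero : F 0 ≠ 0 := by
    obtain ⟨a, ⟨han, haF⟩, hamin'⟩ :
        ∃ a, (a < n ∧ F a ≠ a) ∧ ∀ j, j < a → ¬(j < n ∧ F j ≠ j) :=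
      ⟨Nat.find hex, Nat.find_spec hex, fun j hj => Nat.find_min hex hj⟩
    have hamin : ∀ j, j < a → j < n → F j = j := by
      intro j hj hjn
      have := hamin' j hj
      push_neg at this
      exact this hjn
    rcases Nat.eq_zero_or_pos a with h0 | h0
    · rwa [h0] at haF
    · exfalso
      have hnb1 := hNB a (a - 1) han (by omega) haF (hamin (a - 1) (by omega) (by omega))
        (by omega)
      have hFa2 : F a = a - 2 ∧ 2 ≤ a := by
        rcases hnb1 with h | h <;> omega
      have h1 := hamin (a - 2) (by omega) (by omega)
      have h2 := hFinv a han
      rw [hFa2.1, h1] at h2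
      omega
  by_cases hfixp : ∃ c, c < n ∧ F c = c
  · -- there is a fixed path vertex: n = 2c+1
    obtain ⟨c, ⟨hcn, hcF⟩, hcmin'⟩ :
        ∃ c, (c < n ∧ F c = c) ∧ ∀ j, j < c → ¬(j < n ∧ F j = j) :=
      ⟨Nat.find hfixp, Nat.find_spec hfixp, fun j hj => Nat.find_min hfixp hj⟩
    have hcmin : ∀ j, j < c → j < n → F j ≠ j := by
      intro j hj hjn
      have := hcmin' j hj
      push_neg at this
      exact this hjn
    have hc1 : 1 ≤ c := by
      rcases Nat.eq_zero_or_pos c with h0 | h0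
      · exact absurd (h0 ▸ hcF) hzero
      · exact h0
    -- Step 3 : F (c-1) = c+1
    have hstep3 : F (c - 1) = c + 1 := by
      have hnb1 := hNB (c - 1) c (by omega) hcn (hcmin (c - 1) (by omega) (by omega)) hcF
        (by omega)
      have := hcmin (c - 1) (by omega) (by omega)
      omega
    -- Step 4: downward induction
    have key : ∀ k, k ≤ c → F (c - k) = c + k := by
      intro k
      induction k using Nat.strong_induction_on with
      | _ k ih =>
        intro hk
        match k with
        | 0 => simpa using hcF
        | 1 => simpa using hstep3
        | (k + 2) =>
          have h1 := ih (k + 1) (by omega) (by omega)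
          have h2 := ih k (by omega) (by omega)
          have hc1n : c + (k + 1) < n := by
            have := hFlt (c - (k + 1)) (by omega)
            rwa [h1] at this
          have hadj := hFadj (c - (k + 2)) (c - (k + 1)) (by omega) (by omega) (by omega)
          rw [h1] at hadj
          rcases hadj with h | h
          · exfalso
            have e1 : F (c - (k + 2)) = c + k := by omega
            have ha := hFinv (c - k) (by omega)
            have hb := hFinv (c - (k + 2)) (by omega)
            rw [h2] at ha
            rw [e1] at hb
            omega
          · omega
    have h2c : F 0 = 2 * c := by
      have := key c le_rfl
      rw [Nat.sub_self] at this
      omega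
    have h2cn : 2 * c < n := by
      have := hFlt 0 (by omega)
      rwa [h2c] at this
    have hF2c : F (2 * c) = 0 := by
      have := hFinv 0 (by omega)
      rwa [h2c] at this
    have hF1 : F 1 = 2 * c - 1 := by
      have := key (c - 1) (by omega)
      have e1 : c - (c - 1) = 1 := by omega
      have e2 : c + (c - 1) = 2 * c - 1 := by omega
      rwa [e1, e2] at this
    -- conclude n = 2c + 1
    have hfinal : n = 2 * c + 1 := by
      by_contra hne
      have h2c1 : 2 * c + 1 < n := by omega
      have hadj := hFadj (2 * c) (2 * c + 1) (by omega) h2c1 (by omega)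
      rw [hF2c] at hadj
      have hF2c1 : F (2 * c + 1) = 1 := by omega
      have := hFinv (2 * c + 1) h2c1
      rw [hF2c1, hF1] at this
      omega
    exact ⟨by omega, ⟨c, by omega⟩⟩
  · -- no fixed path vertex: contradiction via connectivity and the partition
    exfalso
    push_neg at hfixp
    have hall : ∀ i : Fin n, Sum.inr i ∈ A0 ∪ A1 := by
      intro i
      rw [hun]
      intro h
      refine hfixp i.val i.isLt ((hFfix i.val i.isLt).1 ?_)
      rwa [show (⟨i.val, i.isLt⟩ : Fin n) = i by simp]
    have hadjk : ∀ (k : ℕ) (h : k + 1 < n),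
        G.Adj (Sum.inr ⟨k, by omega⟩) (Sum.inr ⟨k + 1, h⟩) := by
      intro k h
      simp [hG, joinGraph, pathGraph_adj]
    have h0n : (0 : ℕ) < n := by omega
    have hphiz : phi (Sum.inr ⟨0, h0n⟩) = Sum.inr ⟨F 0, hFlt 0 h0n⟩ := hF 0 h0n
    have hFz : (Sum.inr ⟨F 0, hFlt 0 h0n⟩ : Fin 1 ⊕ Fin n) ∈ A0 ∪ A1 := hall _
    rcases hall ⟨0, h0n⟩ with h0 | h0
    · have hA0 : ∀ (k : ℕ) (h : k < n), (Sum.inr ⟨k, h⟩ : Fin 1 ⊕ Fin n) ∈ A0 := by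
        intro k
        induction k with
        | zero => intro h; exact h0
        | succ k ih =>
          intro h
          rcases hall ⟨k + 1, h⟩ with h1 | h1
          · exact h1
          · exact absurd (hadjk k h) (hcross _ (ih (by omega)) _ h1)
      have hin1 := hphi0 _ h0
      rw [hphiz] at hin1
      exact Set.disjoint_left.mp hdisj (hA0 (F 0) (hFlt 0 h0n)) hin1
    · have hA1 : ∀ (k : ℕ) (h : k < n), (Sum.inr ⟨k, h⟩ : Fin 1 ⊕ Fin n) ∈ A1 := by
        intro k
        induction k with
        | zero => intro h; exact h0
        | succ k ih =>
          intro h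
          rcases hall ⟨k + 1, h⟩ with h1 | h1
          · exact absurd ((hadjk k h).symm) (hcross _ h1 _ (ih (by omega)))
          · exact h1
      have hin0 := hphi1 _ h0
      rw [hphiz] at hin0
      exact Set.disjoint_left.mp hdisj hin0 (hA1 (F 0) (hFlt 0 h0n))

theorem stmt19 (m n : ℕ) (hm : 1 ≤ m) (hn : 1 ≤ n) :
    IsSquareGraph (joinGraph (⊥ : SimpleGraph (Fin m)) (SimpleGraph.pathGraph n)) ↔
      2 ≤ m ∨ (m = 1 ∧ 3 ≤ n ∧ Odd n) := by
  constructor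
  · intro hsq
    by_cases h2 : 2 ≤ m
    · exact Or.inl h2
    · have hm1 : m = 1 := by omega
      subst hm1
      obtain ⟨h3, hodd⟩ := odd_of_square hn hsq
      exact Or.inr ⟨rfl, h3, hodd⟩
  · rintro (h2 | ⟨hm1, hn3, c, hc⟩)
    · exact square_of_two_le h2 hn
    · subst hm1
      exact square_of_odd le_rfl (k := c) (by omega) (by omega)
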